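/- The graded ring ko_* = Z[η,α,β]/(2η, η³, ηα, α² − 4β), with |η|=1, |α|=4, |β|=8, has homotopy groups in degrees 0 through 7 given by: Z, Z/2, Z/2, 0, Z, 0, 0, 0, and the degree-8 component is the free abelian group generated by β. -/

import Mathlib

set_option maxHeartbeats 1000000
set_option synthInstance.maxHeartbeats 400000


/- The coefficient ring of real connective K-theory:
   ko_* = ℤ[η,α,β]/(2η, η³, ηα, α² − 4β), |η|=1, |α|=4, |β|=8. -/

noncomputable section
open MvPolynomial

/-- The defining ideal of relations. -/
def koI : Ideal (MvPolynomial (Fin 3) ℤ) :=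
  Ideal.span {2 * X 0, (X 0) ^ 3, X 0 * X 1, (X 1) ^ 2 - 4 * X 2}

/-- The ring ko_* -/
abbrev koR := MvPolynomial (Fin 3) ℤ ⧸ koI

def koEta : koR := Ideal.Quotient.mk koI (X 0)
def koAlpha : koR := Ideal.Quotient.mk koI (X 1)
def koBeta : koR := Ideal.Quotient.mk koI (X 2)

/-- Weights: |η|=1, |α|=4, |β|=8. -/
def koW : Fin 3 → ℕ := ![1, 4, 8]

/-- The degree-`n` homogeneous component of ko_*, as the image in the quotient of the
weighted-homogeneous polynomials of weighted degree `n`. -/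
def koDeg (n : ℕ) : Submodule ℤ koR :=
  Submodule.map (Ideal.Quotient.mkₐ ℤ koI).toLinearMap
    (MvPolynomial.weightedHomogeneousSubmodule ℤ koW n)

namespace KoAux

lemma weight_koW (d : Fin 3 →₀ ℕ) : Finsupp.weight koW d = d 0 * 1 + d 1 * 4 + d 2 * 8 := by
  rw [Finsupp.weight_apply, Finsupp.sum_fintype]
  · simp [koW, Fin.sum_univ_three, mul_comm]
  · intro i; simp

lemma monomial_eq_prod (d : Fin 3 →₀ ℕ) :
    (monomial d (1:ℤ)) = X 0 ^ d 0 * X 1 ^ d 1 * X 2 ^ d 2 := by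
  rw [monomial_eq, Finsupp.prod_fintype]
  · simp [Fin.prod_univ_three]
  · intro i; simp

lemma memI1 : (2 * X 0 : MvPolynomial (Fin 3) ℤ) ∈ koI := Ideal.subset_span (by simp)
lemma memI2 : ((X 0) ^ 3 : MvPolynomial (Fin 3) ℤ) ∈ koI := Ideal.subset_span (by simp)
lemma memI3 : (X 0 * X 1 : MvPolynomial (Fin 3) ℤ) ∈ koI := Ideal.subset_span (by simp)
lemma memI4 : ((X 1) ^ 2 - 4 * X 2 : MvPolynomial (Fin 3) ℤ) ∈ koI :=
  Ideal.subset_span (by simp)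

lemma mk_zero_of_mem {p : MvPolynomial (Fin 3) ℤ} (hp : p ∈ koI) :
    Ideal.Quotient.mk koI p = 0 := Ideal.Quotient.eq_zero_iff_mem.mpr hp

/-- Any element of `koDeg n` lies in `S` provided the images of all monomials of weighted
degree `n` do. -/
lemma koDeg_le {n : ℕ} {S : Submodule ℤ koR}
    (h : ∀ a b c : ℕ, a + 4*b + 8*c = n →
      Ideal.Quotient.mk koI (X 0 ^ a * X 1 ^ b * X 2 ^ c) ∈ S) :
    koDeg n ≤ S := by
  rintro x ⟨p, hp, rfl⟩
  have hp' : p.IsWeightedHomogeneous koW n := hp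
  have hrep : p = ∑ v ∈ p.support, (coeff v p) • (monomial v (1:ℤ)) := by
    conv_lhs => rw [p.as_sum]
    refine Finset.sum_congr rfl fun v _ => ?_
    rw [smul_monomial, smul_eq_mul, mul_one]
  show (Ideal.Quotient.mkₐ ℤ koI).toLinearMap p ∈ S
  rw [hrep, map_sum]
  refine Submodule.sum_mem S fun v hv => ?_
  rw [map_smul]
  refine Submodule.smul_mem S _ ?_
  have hw := hp' (MvPolynomial.mem_support_iff.mp hv)
  rw [weight_koW] at hw
  have : (Ideal.Quotient.mkₐ ℤ koI).toLinearMap (monomial v (1:ℤ)) =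
      Ideal.Quotient.mk koI (X 0 ^ v 0 * X 1 ^ v 1 * X 2 ^ v 2) := by
    rw [monomial_eq_prod]; rfl
  rw [this]
  exact h (v 0) (v 1) (v 2) (by omega)

lemma isWH_X_pow (i : Fin 3) (k : ℕ) :
    IsWeightedHomogeneous koW ((X i : MvPolynomial (Fin 3) ℤ) ^ k) (k * koW i) := by
  induction k with
  | zero => simpa using isWeightedHomogeneous_one ℤ koW
  | succ k ih =>
      rw [pow_succ, Nat.succ_mul]
      exact ih.mul (isWeightedHomogeneous_X ℤ koW i)

lemma mk_mem_koDeg (a b c : ℕ) :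
    Ideal.Quotient.mk koI (X 0 ^ a * X 1 ^ b * X 2 ^ c) ∈ koDeg (a + 4*b + 8*c) := by
  refine ⟨X 0 ^ a * X 1 ^ b * X 2 ^ c, ?_, rfl⟩
  show IsWeightedHomogeneous koW _ _
  have h := ((isWH_X_pow 0 a).mul (isWH_X_pow 1 b)).mul (isWH_X_pow 2 c)
  have e : a * koW 0 + b * koW 1 + c * koW 2 = a + 4*b + 8*c := by
    simp [koW]; ring
  rwa [e] at h

/-! ### Detection homomorphisms -/

/-- Evaluation at `(0,0,0)`. -/
def φ0 : koR →+* ℤ :=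
  Ideal.Quotient.lift koI (aeval ![0,0,0]).toRingHom (by
    intro p hp
    have : koI ≤ RingHom.ker (aeval ![0,0,0] : MvPolynomial (Fin 3) ℤ →ₐ[ℤ] ℤ).toRingHom := by
      rw [koI, Ideal.span_le]
      rintro q hq
      simp only [Set.mem_insert_iff, Set.mem_singleton_iff] at hq
      rcases hq with rfl | rfl | rfl | rfl <;> simp [RingHom.mem_ker]
    exact this hp)

/-- Evaluation at `(0,2,1)`. -/
def φ1 : koR →+* ℤ :=
  Ideal.Quotient.lift koI (aeval ![0,2,1]).toRingHom (by
    intro p hp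
    have : koI ≤ RingHom.ker (aeval ![0,2,1] : MvPolynomial (Fin 3) ℤ →ₐ[ℤ] ℤ).toRingHom := by
      rw [koI, Ideal.span_le]
      rintro q hq
      simp only [Set.mem_insert_iff, Set.mem_singleton_iff] at hq
      rcases hq with rfl | rfl | rfl | rfl <;> simp [RingHom.mem_ker]
    exact this hp)

/-- The truncated polynomial ring `(ℤ/2)[t]/(t³)`, detecting `η` and `η²`. -/
abbrev A2 := Polynomial (ZMod 2) ⧸ Ideal.span {(Polynomial.X : Polynomial (ZMod 2)) ^ 3}

def tA : A2 := Ideal.Quotient.mk _ Polynomial.X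

lemma two_A2 : (2 : A2) = 0 := by
  have : (2 : Polynomial (ZMod 2)) = 0 := by
    have h := CharP.cast_eq_zero (Polynomial (ZMod 2)) 2
    simpa using h
  show ((Ideal.Quotient.mk _ (2 : Polynomial (ZMod 2))) : A2) = 0
  rw [this, map_zero]

lemma tA_cube : tA ^ 3 = 0 := by
  show (Ideal.Quotient.mk _ (Polynomial.X ^ 3) : A2) = 0
  exact Ideal.Quotient.eq_zero_iff_mem.mpr (Ideal.subset_span rfl)

def ψ : koR →+* A2 :=
  Ideal.Quotient.lift koI (aeval ![tA, 0, 0]).toRingHom (by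
    intro p hp
    have : koI ≤ RingHom.ker (aeval ![tA, 0, 0] : MvPolynomial (Fin 3) ℤ →ₐ[ℤ] A2).toRingHom := by
      rw [koI, Ideal.span_le]
      rintro q hq
      simp only [Set.mem_insert_iff, Set.mem_singleton_iff] at hq
      rcases hq with rfl | rfl | rfl | rfl <;>
        simp [RingHom.mem_ker, two_A2, tA_cube]
    exact this hp)

lemma tA_pow_ne_zero {k : ℕ} (hk : k < 3) : tA ^ k ≠ 0 := by
  intro h
  have hmem : (Polynomial.X : Polynomial (ZMod 2)) ^ k ∈
      Ideal.span {(Polynomial.X : Polynomial (ZMod 2)) ^ 3} := by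
    rw [← Ideal.Quotient.eq_zero_iff_mem]
    exact h
  rw [Ideal.mem_span_singleton] at hmem
  have hX : (Polynomial.X : Polynomial (ZMod 2)) ^ k ≠ 0 :=
    pow_ne_zero _ Polynomial.X_ne_zero
  have := Polynomial.natDegree_le_of_dvd hmem hX
  simp [Polynomial.natDegree_X_pow] at this
  omega

lemma psi_eta_pow (k : ℕ) : ψ (koEta ^ k) = tA ^ k := by
  simp only [koEta, map_pow, ψ, Ideal.Quotient.lift_mk]
  simp

lemma eta_ne_zero : koEta ≠ 0 := by
  intro h
  have := psi_eta_pow 1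
  rw [h] at this
  simp at this
  exact tA_pow_ne_zero (by norm_num) (k := 1) (by simpa using this.symm)

lemma eta_sq_ne_zero : koEta ^ 2 ≠ 0 := by
  intro h
  have := psi_eta_pow 2
  rw [h, map_zero] at this
  exact tA_pow_ne_zero (by norm_num) (k := 2) this.symm

lemma two_eta : (2 : ℤ) • koEta = 0 := by
  have : (2:ℤ) • koEta = Ideal.Quotient.mk koI (2 * X 0) := by
    simp [koEta, map_mul, zsmul_eq_mul]
    rfl
  rw [this]
  exact mk_zero_of_mem memI1

lemma two_eta_sq : (2 : ℤ) • (koEta ^ 2) = 0 := by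
  have h : (2 * X 0 * X 0 : MvPolynomial (Fin 3) ℤ) ∈ koI := Ideal.mul_mem_right _ _ memI1
  have : (2:ℤ) • (koEta ^ 2) = Ideal.Quotient.mk koI (2 * X 0 * X 0) := by
    simp [koEta, zsmul_eq_mul, ← map_pow, ← map_mul, ← map_ofNat]
    ring_nf
    rfl
  rw [this]
  exact mk_zero_of_mem h

lemma phi0_one : φ0 (1 : koR) = 1 := by simp [φ0]

lemma phi1_alpha : φ1 koAlpha = 2 := by
  simp [φ1, koAlpha, Ideal.Quotient.lift_mk]

lemma phi1_beta : φ1 koBeta = 1 := by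
  simp [φ1, koBeta, Ideal.Quotient.lift_mk]

/-! ### Generic equivalences for cyclic subgroups -/

lemma span_equiv_int {g : koR} (hg : ∀ n : ℤ, n • g = 0 → n = 0) :
    Nonempty ((Submodule.span ℤ ({g} : Set koR)) ≃+ ℤ) := by
  set g' : Submodule.span ℤ ({g} : Set koR) := ⟨g, Submodule.mem_span_singleton_self g⟩
  have hb : Function.Bijective (zmultiplesHom _ g') := by
    constructor
    · intro m n h
      have hmn : m • g = n • g := by simpa using congrArg Subtype.val h
      have h' : (m - n) • g = 0 := by rw [sub_smul, hmn, sub_self]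
      have := hg _ h'
      omega
    · rintro ⟨x, hx⟩
      obtain ⟨n, rfl⟩ := Submodule.mem_span_singleton.mp hx
      exact ⟨n, by ext; simp [g']⟩
  exact ⟨(AddEquiv.ofBijective _ hb).symm⟩

lemma span_equiv_zmod2 {g : koR} (h2 : (2 : ℤ) • g = 0) (hg : g ≠ 0) :
    Nonempty ((Submodule.span ℤ ({g} : Set koR)) ≃+ ZMod 2) := by
  set g' : Submodule.span ℤ ({g} : Set koR) := ⟨g, Submodule.mem_span_singleton_self g⟩
  have h2' : (zmultiplesHom _ g') ((2:ℕ) : ℤ) = 0 := by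
    ext
    simpa using congrArg id h2
  set F : ZMod 2 →+ Submodule.span ℤ ({g} : Set koR) := ZMod.lift 2 ⟨zmultiplesHom _ g', h2'⟩
  have hb : Function.Bijective F := by
    constructor
    · intro a b hab
      have key : ∀ c : ZMod 2, F c = 0 → c = 0 := by
        intro c hc
        fin_cases c
        · rfl
        · exfalso
          have h1 : F 1 = g' := by
            have : ((1:ℤ) : ZMod 2) = 1 := by decide
            rw [← this, ZMod.lift_coe]
            simp
          have hc1 : F 1 = 0 := hc
          rw [h1] at hc1
          exact hg (by simpa [g'] using congrArg Subtype.val hc1)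
      have := key (a - b) (by rw [map_sub, hab, sub_self])
      rwa [sub_eq_zero] at this
    · rintro ⟨x, hx⟩
      obtain ⟨n, rfl⟩ := Submodule.mem_span_singleton.mp hx
      refine ⟨(n : ZMod 2), ?_⟩
      rw [ZMod.lift_coe]
      rfl
  exact ⟨(AddEquiv.ofBijective F hb).symm⟩

/-! ### Computation of each graded piece -/

lemma koDeg0 : koDeg 0 = Submodule.span ℤ ({(1 : koR)} : Set koR) := by
  apply le_antisymm
  · apply koDeg_le
    intro a b c h
    obtain ⟨rfl, rfl, rfl⟩ : a = 0 ∧ b = 0 ∧ c = 0 := by omega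
    simpa using Submodule.mem_span_singleton_self (1 : koR)
  · rw [Submodule.span_le, Set.singleton_subset_iff]
    simpa using mk_mem_koDeg 0 0 0

lemma koDeg1 : koDeg 1 = Submodule.span ℤ ({koEta} : Set koR) := by
  apply le_antisymm
  · apply koDeg_le
    intro a b c h
    obtain ⟨rfl, rfl, rfl⟩ : a = 1 ∧ b = 0 ∧ c = 0 := by omega
    simpa [koEta] using Submodule.mem_span_singleton_self koEta
  · rw [Submodule.span_le, Set.singleton_subset_iff]
    have := mk_mem_koDeg 1 0 0
    simpa [koEta] using this

lemma koDeg2 : koDeg 2 = Submodule.span ℤ ({koEta ^ 2} : Set koR) := by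
  apply le_antisymm
  · apply koDeg_le
    intro a b c h
    obtain ⟨rfl, rfl, rfl⟩ : a = 2 ∧ b = 0 ∧ c = 0 := by omega
    simpa [koEta, map_pow] using Submodule.mem_span_singleton_self (koEta ^ 2)
  · rw [Submodule.span_le, Set.singleton_subset_iff]
    have := mk_mem_koDeg 2 0 0
    simpa [koEta, map_pow] using this

lemma koDeg4 : koDeg 4 = Submodule.span ℤ ({koAlpha} : Set koR) := by
  apply le_antisymm
  · apply koDeg_le
    intro a b c h
    have : (a = 4 ∧ b = 0 ∧ c = 0) ∨ (a = 0 ∧ b = 1 ∧ c = 0) := by omega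
    rcases this with ⟨rfl, rfl, rfl⟩ | ⟨rfl, rfl, rfl⟩
    · have h4 : ((X 0 : MvPolynomial (Fin 3) ℤ) ^ 4 * X 1 ^ 0 * X 2 ^ 0) ∈ koI := by
        have : ((X 0 : MvPolynomial (Fin 3) ℤ) ^ 4 * X 1 ^ 0 * X 2 ^ 0) = X 0 ^ 3 * X 0 := by
          ring
        rw [this]
        exact Ideal.mul_mem_right _ _ memI2
      rw [mk_zero_of_mem h4]
      exact Submodule.zero_mem _
    · simpa [koAlpha] using Submodule.mem_span_singleton_self koAlpha
  · rw [Submodule.span_le, Set.singleton_subset_iff]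
    have := mk_mem_koDeg 0 1 0
    simpa [koAlpha] using this

lemma koDeg_bot (n : ℕ) (hn : ∀ a b c : ℕ, a + 4*b + 8*c = n →
    (X 0 ^ a * X 1 ^ b * X 2 ^ c : MvPolynomial (Fin 3) ℤ) ∈ koI) : koDeg n = ⊥ := by
  apply le_bot_iff.mp
  apply koDeg_le
  intro a b c h
  rw [mk_zero_of_mem (hn a b c h)]
  exact Submodule.zero_mem _

lemma koDeg3 : koDeg 3 = ⊥ := by
  apply koDeg_bot
  intro a b c h
  obtain ⟨rfl, rfl, rfl⟩ : a = 3 ∧ b = 0 ∧ c = 0 := by omega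
  have : ((X 0 : MvPolynomial (Fin 3) ℤ) ^ 3 * X 1 ^ 0 * X 2 ^ 0) = X 0 ^ 3 := by ring
  rw [this]; exact memI2

lemma koDeg5 : koDeg 5 = ⊥ := by
  apply koDeg_bot
  intro a b c h
  have : (a = 5 ∧ b = 0 ∧ c = 0) ∨ (a = 1 ∧ b = 1 ∧ c = 0) := by omega
  rcases this with ⟨rfl, rfl, rfl⟩ | ⟨rfl, rfl, rfl⟩
  · have : ((X 0 : MvPolynomial (Fin 3) ℤ) ^ 5 * X 1 ^ 0 * X 2 ^ 0) = X 0 ^ 3 * X 0 ^ 2 := by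
      ring
    rw [this]; exact Ideal.mul_mem_right _ _ memI2
  · have : ((X 0 : MvPolynomial (Fin 3) ℤ) ^ 1 * X 1 ^ 1 * X 2 ^ 0) = X 0 * X 1 := by ring
    rw [this]; exact memI3

lemma koDeg6 : koDeg 6 = ⊥ := by
  apply koDeg_bot
  intro a b c h
  have : (a = 6 ∧ b = 0 ∧ c = 0) ∨ (a = 2 ∧ b = 1 ∧ c = 0) := by omega
  rcases this with ⟨rfl, rfl, rfl⟩ | ⟨rfl, rfl, rfl⟩
  · have : ((X 0 : MvPolynomial (Fin 3) ℤ) ^ 6 * X 1 ^ 0 * X 2 ^ 0) = X 0 ^ 3 * X 0 ^ 3 := by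
      ring
    rw [this]; exact Ideal.mul_mem_right _ _ memI2
  · have : ((X 0 : MvPolynomial (Fin 3) ℤ) ^ 2 * X 1 ^ 1 * X 2 ^ 0) = X 0 * X 1 * X 0 := by
      ring
    rw [this]; exact Ideal.mul_mem_right _ _ memI3

lemma koDeg7 : koDeg 7 = ⊥ := by
  apply koDeg_bot
  intro a b c h
  have : (a = 7 ∧ b = 0 ∧ c = 0) ∨ (a = 3 ∧ b = 1 ∧ c = 0) := by omega
  rcases this with ⟨rfl, rfl, rfl⟩ | ⟨rfl, rfl, rfl⟩
  · have : ((X 0 : MvPolynomial (Fin 3) ℤ) ^ 7 * X 1 ^ 0 * X 2 ^ 0) = X 0 ^ 3 * X 0 ^ 4 := by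
      ring
    rw [this]; exact Ideal.mul_mem_right _ _ memI2
  · have : ((X 0 : MvPolynomial (Fin 3) ℤ) ^ 3 * X 1 ^ 1 * X 2 ^ 0) = X 0 * X 1 * X 0 ^ 2 := by
      ring
    rw [this]; exact Ideal.mul_mem_right _ _ memI3

lemma koDeg8 : koDeg 8 = Submodule.span ℤ ({koBeta} : Set koR) := by
  apply le_antisymm
  · apply koDeg_le
    intro a b c h
    have : (a = 8 ∧ b = 0 ∧ c = 0) ∨ (a = 4 ∧ b = 1 ∧ c = 0) ∨
        (a = 0 ∧ b = 2 ∧ c = 0) ∨ (a = 0 ∧ b = 0 ∧ c = 1) := by omega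
    rcases this with ⟨rfl, rfl, rfl⟩ | ⟨rfl, rfl, rfl⟩ | ⟨rfl, rfl, rfl⟩ | ⟨rfl, rfl, rfl⟩
    · have hm : ((X 0 : MvPolynomial (Fin 3) ℤ) ^ 8 * X 1 ^ 0 * X 2 ^ 0) ∈ koI := by
        have : ((X 0 : MvPolynomial (Fin 3) ℤ) ^ 8 * X 1 ^ 0 * X 2 ^ 0) = X 0 ^ 3 * X 0 ^ 5 := by
          ring
        rw [this]; exact Ideal.mul_mem_right _ _ memI2
      rw [mk_zero_of_mem hm]; exact Submodule.zero_mem _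
    · have hm : ((X 0 : MvPolynomial (Fin 3) ℤ) ^ 4 * X 1 ^ 1 * X 2 ^ 0) ∈ koI := by
        have : ((X 0 : MvPolynomial (Fin 3) ℤ) ^ 4 * X 1 ^ 1 * X 2 ^ 0) =
            X 0 * X 1 * X 0 ^ 3 := by ring
        rw [this]; exact Ideal.mul_mem_right _ _ memI3
      rw [mk_zero_of_mem hm]; exact Submodule.zero_mem _
    · have key : Ideal.Quotient.mk koI ((X 0 : MvPolynomial (Fin 3) ℤ) ^ 0 * X 1 ^ 2 * X 2 ^ 0)
          = (4 : ℤ) • koBeta := by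
        have e1 : ((X 0 : MvPolynomial (Fin 3) ℤ) ^ 0 * X 1 ^ 2 * X 2 ^ 0) = (X 1) ^ 2 := by
          ring
        have e2 : Ideal.Quotient.mk koI ((X 1 : MvPolynomial (Fin 3) ℤ) ^ 2) =
            Ideal.Quotient.mk koI (4 * X 2) := by
          rw [Ideal.Quotient.mk_eq_mk_iff_sub_mem]
          exact memI4
        rw [e1, e2, map_mul]
        show (Ideal.Quotient.mk koI (4 : MvPolynomial (Fin 3) ℤ)) * koBeta = (4 : ℤ) • koBeta
        rw [zsmul_eq_mul]
        norm_num [map_ofNat]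
      rw [key]
      exact Submodule.smul_mem _ _ (Submodule.mem_span_singleton_self koBeta)
    · simpa [koBeta] using Submodule.mem_span_singleton_self koBeta
  · rw [Submodule.span_le, Set.singleton_subset_iff]
    have := mk_mem_koDeg 0 0 1
    simpa [koBeta] using this

lemma beta_inj : ∀ n : ℤ, n • koBeta = 0 → n = 0 := by
  intro n h
  have := congrArg φ1 h
  rw [map_zsmul, phi1_beta, map_zero] at this
  simpa using this

lemma alpha_inj : ∀ n : ℤ, n • koAlpha = 0 → n = 0 := by
  intro n h
  have := congrArg φ1 h
  rw [map_zsmul, phi1_alpha, map_zero, smul_eq_mul] at this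
  omega

lemma one_inj : ∀ n : ℤ, n • (1 : koR) = 0 → n = 0 := by
  intro n h
  have := congrArg φ0 h
  rw [map_zsmul, phi0_one, map_zero] at this
  simpa using this

end KoAux

open KoAux

/-- The homotopy of ko in degrees 0–7 is ℤ, ℤ/2, ℤ/2, 0, ℤ, 0, 0, 0, and the degree-8
component is free abelian on β. -/
theorem ko_homotopy_groups :
    Nonempty ((koDeg 0) ≃+ ℤ) ∧
    Nonempty ((koDeg 1) ≃+ ZMod 2) ∧
    Nonempty ((koDeg 2) ≃+ ZMod 2) ∧
    koDeg 3 = ⊥ ∧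
    Nonempty ((koDeg 4) ≃+ ℤ) ∧
    koDeg 5 = ⊥ ∧ koDeg 6 = ⊥ ∧ koDeg 7 = ⊥ ∧
    (koBeta ∈ koDeg 8 ∧ ∀ x ∈ koDeg 8, ∃! n : ℤ, x = n • koBeta) := by
  refine ⟨?_, ?_, ?_, koDeg3, ?_, koDeg5, koDeg6, koDeg7, ?_, ?_⟩
  · rw [koDeg0]; exact span_equiv_int one_inj
  · rw [koDeg1]; exact span_equiv_zmod2 two_eta eta_ne_zero
  · rw [koDeg2]; exact span_equiv_zmod2 two_eta_sq eta_sq_ne_zero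
  · rw [koDeg4]; exact span_equiv_int alpha_inj
  · rw [koDeg8]; exact Submodule.mem_span_singleton_self koBeta
  · intro x hx
    rw [koDeg8] at hx
    obtain ⟨n, hn⟩ := Submodule.mem_span_singleton.mp hx
    refine ⟨n, hn.symm, ?_⟩
    intro m hm
    have : (m - n) • koBeta = 0 := by
      rw [sub_smul, ← hm, ← hn, sub_self]
    have := beta_inj _ this
    omega
end
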